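/- If f : ℝ → ℝ is twice differentiable with f'' eventually positive, and (d/dx)(1/f''(x)) → 0 as x → +∞, then x·f''(x) → +∞ as x → +∞. In particular 1/(x·f''(x)) → 0. -/

import Mathlib

open Filter

/-- If a function's derivative tends to 0 at +∞ (and it's differentiable for large x),
then `h x / x → 0`. -/
lemma aux_div_tendsto (h : ℝ → ℝ) (A : ℝ)
    (hdiff : ∀ x ≥ A, DifferentiableAt ℝ h x)
    (hd : Tendsto (deriv h) atTop (nhds 0)) :
    Tendsto (fun x => h x / x) atTop (nhds 0) := by
  rw [NormedAddCommGroup.tendsto_nhds_zero]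
  intro ε hε
  have hε2 : 0 < ε / 2 := by linarith
  obtain ⟨B0, hB0⟩ := (eventually_atTop).1
    ((NormedAddCommGroup.tendsto_nhds_zero.1 hd) (ε / 2) hε2)
  set B := max A (max B0 0) with hBdef
  have hBA : A ≤ B := le_max_left _ _
  have hBB0 : B0 ≤ B := le_trans (le_max_left _ _) (le_max_right _ _)
  have hB0' : (0 : ℝ) ≤ B := le_trans (le_max_right _ _) (le_max_right _ _)
  have key : ∀ x ≥ B, |h x - h B| ≤ ε / 2 * (x - B) := by
    intro x hx
    have := Convex.norm_image_sub_le_of_norm_deriv_le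
      (f := h) (s := Set.Icc B x) (C := ε / 2)
      (fun y hy => hdiff y (le_trans hBA hy.1))
      (fun y hy => le_of_lt (hB0 y (le_trans hBB0 hy.1)))
      (convex_Icc _ _) (Set.left_mem_Icc.2 hx) (Set.right_mem_Icc.2 hx)
    simpa [Real.norm_eq_abs, abs_of_nonneg (sub_nonneg.2 hx)] using this
  filter_upwards [eventually_ge_atTop (max B 1),
    eventually_gt_atTop (2 * |h B| / ε)] with x hx1 hx2
  have hxB : B ≤ x := le_trans (le_max_left _ _) hx1
  have hx1' : (1 : ℝ) ≤ x := le_trans (le_max_right _ _) hx1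
  have hxpos : (0 : ℝ) < x := lt_of_lt_of_le one_pos hx1'
  have h1 : |h x| ≤ |h B| + ε / 2 * x := by
    have := key x hxB
    have h2 : |h x| - |h B| ≤ |h x - h B| := by
      simpa using abs_sub_abs_le_abs_sub (h x) (h B)
    nlinarith [abs_nonneg (h B)]
  have h3 : |h B| / x < ε / 2 := by
    rw [div_lt_iff₀ hxpos]
    rw [div_lt_iff₀ hε] at hx2
    nlinarith
  have : ‖h x / x‖ = |h x| / x := by
    rw [Real.norm_eq_abs, abs_div, abs_of_pos hxpos]
  rw [this]
  rw [div_lt_iff₀ hxpos] at h3 ⊢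
  nlinarith

theorem stmt_0 (f : ℝ → ℝ)
    (hf2 : ∀ x, DifferentiableAt ℝ (deriv f) x)
    (hf3 : ∀ x, DifferentiableAt ℝ (deriv (deriv f)) x)
    (hpos : ∀ᶠ x in atTop, 0 < deriv (deriv f) x)
    (hlim : Tendsto (deriv fun x => (deriv (deriv f) x)⁻¹) atTop (nhds 0)) :
    Tendsto (fun x => x * deriv (deriv f) x) atTop atTop ∧
    Tendsto (fun x => (x * deriv (deriv f) x)⁻¹) atTop (nhds 0) := by
  set g := deriv (deriv f) with hg
  obtain ⟨A, hA⟩ := (eventually_atTop).1 hpos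
  have hdiff : ∀ x ≥ A, DifferentiableAt ℝ (fun y => (g y)⁻¹) x := by
    intro x hx
    exact (hf3 x).inv (ne_of_gt (hA x hx))
  have hdivto : Tendsto (fun x => (g x)⁻¹ / x) atTop (nhds 0) :=
    aux_div_tendsto (fun y => (g y)⁻¹) A hdiff hlim
  have hin : Tendsto (fun x => (g x)⁻¹ / x) atTop (nhdsWithin 0 (Set.Ioi 0)) := by
    apply tendsto_nhdsWithin_of_tendsto_nhds_of_eventually_within _ hdivto
    filter_upwards [eventually_ge_atTop A, eventually_gt_atTop 0] with x hxA hx0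
    exact div_pos (inv_pos.2 (hA x hxA)) hx0
  have hmain : Tendsto (fun x => x * g x) atTop atTop := by
    have := hin.inv_tendsto_nhdsGT_zero
    apply this.congr'
    filter_upwards [eventually_ge_atTop A, eventually_gt_atTop 0] with x hxA hx0
    have hgx : g x ≠ 0 := ne_of_gt (hA x hxA)
    show ((g x)⁻¹ / x)⁻¹ = x * g x
    field_simp
  exact ⟨hmain, hmain.inv_tendsto_atTop⟩
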